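/- Let K be a totally real number field, p an odd prime, and let (a, b, c) ∈ O_K³ be a non-trivial solution of a^p + b^p = c² with aO_K + bO_K + cO_K = O_K. Let E be the Weierstrass curve Y² = X³ + 4cX² + 4a^p X with j-invariant j_E = 2^6 (a^p + 4b^p)³ / (a²b)^p. Let P be a prime ideal of O_K dividing 2 such that P | ab, and suppose p > 6·v_P(2). Then v_P(j_E) < 0 and p ∤ v_P(j_E). -/

import Mathlib

open NumberField IsDedekindDomain

open scoped Classical in
/-- The additive `P`-adic valuation on a number field `K`, normalized so that
`vP P x` is the exponent of `P` in the factorization of `x`, with `vP P 0 = 0`. -/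
noncomputable def vP {K : Type} [Field K] [NumberField K]
    (P : HeightOneSpectrum (𝓞 K)) (x : K) : ℤ :=
  if hx : x = 0 then 0
  else - Multiplicative.toAdd (WithZero.unzero ((P.valuation K).ne_zero_iff.mpr hx))


variable {K : Type} [Field K] [NumberField K] (P : HeightOneSpectrum (𝓞 K))

lemma vP_spec {x : K} (hx : x ≠ 0) :
    P.valuation K x = ((Multiplicative.ofAdd (-(vP P x)) : Multiplicative ℤ) : WithZero (Multiplicative ℤ)) := by
  rw [vP, dif_neg hx, neg_neg, ofAdd_toAdd, WithZero.coe_unzero]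

lemma vP_eq_of_valuation {x : K} (hx : x ≠ 0) {n : ℤ}
    (h : P.valuation K x = ((Multiplicative.ofAdd (-n) : Multiplicative ℤ) : WithZero (Multiplicative ℤ))) :
    vP P x = n := by
  have := (vP_spec P hx).symm.trans h
  rw [WithZero.coe_inj] at this
  have := Multiplicative.ofAdd.injective this
  omega

lemma vP_mul {x y : K} (hx : x ≠ 0) (hy : y ≠ 0) :
    vP P (x * y) = vP P x + vP P y := by
  apply vP_eq_of_valuation P (mul_ne_zero hx hy)
  rw [map_mul, vP_spec P hx, vP_spec P hy, ← WithZero.coe_mul, ← ofAdd_add]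
  ring_nf

lemma vP_pow {x : K} (hx : x ≠ 0) (n : ℕ) : vP P (x ^ n) = n * vP P x := by
  induction n with
  | zero => simp [pow_zero, vP]; rfl
  | succ k ih =>
      rw [pow_succ, vP_mul P (pow_ne_zero k hx) hx, ih]
      push_cast; ring

lemma vP_div {x y : K} (hx : x ≠ 0) (hy : y ≠ 0) :
    vP P (x / y) = vP P x - vP P y := by
  have h : x / y * y = x := div_mul_cancel₀ x hy
  have := vP_mul P (by exact div_ne_zero hx hy) hy
  rw [h] at this; omega

lemma vP_add_left {x y : K} (hx : x ≠ 0) (hy : y ≠ 0) (h : vP P x < vP P y) :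
    x + y ≠ 0 ∧ vP P (x + y) = vP P x := by
  have hlt : P.valuation K y < P.valuation K x := by
    rw [vP_spec P hx, vP_spec P hy, WithZero.coe_lt_coe, Multiplicative.ofAdd_lt]
    omega
  have hne : x + y ≠ 0 := by
    intro h0
    have := Valuation.map_add_eq_of_lt_left (P.valuation K) hlt
    rw [h0, map_zero] at this
    exact ((P.valuation K).ne_zero_iff.mpr hx) this.symm
  refine ⟨hne, vP_eq_of_valuation P hne ?_⟩
  rw [Valuation.map_add_eq_of_lt_left (P.valuation K) hlt, vP_spec P hx]

lemma vP_int_nonneg (x : 𝓞 K) (hx : x ≠ 0) : 0 ≤ vP P (algebraMap (𝓞 K) K x) := by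
  have h1 := P.valuation_le_one (K := K) x
  have hx' : algebraMap (𝓞 K) K x ≠ 0 := by
    simpa using (map_ne_zero_iff _ (FaithfulSMul.algebraMap_injective (𝓞 K) K)).mpr hx
  rw [vP_spec P hx', ← WithZero.coe_one, WithZero.coe_le_coe, ← ofAdd_zero,
    Multiplicative.ofAdd_le] at h1
  omega

lemma vP_int_pos (x : 𝓞 K) (hx : x ≠ 0) (hmem : x ∈ P.asIdeal) :
    0 < vP P (algebraMap (𝓞 K) K x) := by
  have h1 : P.valuation K (algebraMap (𝓞 K) K x) < 1 := by
    rw [P.valuation_lt_one_iff_dvd, Ideal.dvd_span_singleton]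
    exact hmem
  have hx' : algebraMap (𝓞 K) K x ≠ 0 := by
    simpa using (map_ne_zero_iff _ (FaithfulSMul.algebraMap_injective (𝓞 K) K)).mpr hx
  rw [vP_spec P hx', ← WithZero.coe_one, WithZero.coe_lt_coe, ← ofAdd_zero,
    Multiplicative.ofAdd_lt] at h1
  omega

lemma vP_int_zero (x : 𝓞 K) (hx : x ≠ 0) (hmem : x ∉ P.asIdeal) :
    vP P (algebraMap (𝓞 K) K x) = 0 := by
  have h := vP_int_nonneg P x hx
  rcases lt_or_eq_of_le h with h' | h'
  · exfalso
    apply hmem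
    have hx' : algebraMap (𝓞 K) K x ≠ 0 := by
      simpa using (map_ne_zero_iff _ (FaithfulSMul.algebraMap_injective (𝓞 K) K)).mpr hx
    have h1 : P.valuation K (algebraMap (𝓞 K) K x) < 1 := by
      rw [vP_spec P hx', ← WithZero.coe_one, WithZero.coe_lt_coe, ← ofAdd_zero,
        Multiplicative.ofAdd_lt]
      omega
    rw [P.valuation_lt_one_iff_dvd, Ideal.dvd_span_singleton] at h1
    exact h1
  · omega

/-- **Potentially multiplicative reduction of the Frey curve `Y² = X³ + 4cX² + 4aᵖX` at
primes above `2`**. Let `(a,b,c)` be a non-trivial solution of `aᵖ + bᵖ = c²` over a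
totally real field `K` with `aO_K + bO_K + cO_K = O_K`, let `P ∣ 2` with `P ∣ ab`, and
suppose `p > 6 v_P 2`. Then the `j`-invariant `j_E = 2⁶(aᵖ + 4bᵖ)³/(a²b)ᵖ` satisfies
`v_P(j_E) < 0` and `p ∤ v_P(j_E)`. -/
theorem frey_curve_pp2_j_valuation_at_two
    (K : Type) [Field K] [NumberField K]
    (htotallyReal : ∀ v : InfinitePlace K, v.IsReal)
    (p : ℕ) (hp : p.Prime) (hp2 : p ≠ 2) (a b c : 𝓞 K)
    (hsol : a ^ p + b ^ p = c ^ 2)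
    (hnontriv : ¬ (a * b * c = 0 ∨ (a = 1 ∧ b = 1 ∧ c ^ 2 = 2)))
    (hcoprime : Ideal.span {a} ⊔ Ideal.span {b} ⊔ Ideal.span {c} = ⊤)
    (P : HeightOneSpectrum (𝓞 K)) (hP2 : (2 : 𝓞 K) ∈ P.asIdeal)
    (hPab : a * b ∈ P.asIdeal)
    (hpbig : 6 * vP P (2 : K) < (p : ℤ))
    (j : K)
    (hj : j = 2 ^ 6 * (algebraMap (𝓞 K) K (a ^ p + 4 * b ^ p)) ^ 3 /
      (algebraMap (𝓞 K) K (a ^ 2 * b)) ^ p) :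
    vP P j < 0 ∧ ¬ ((p : ℤ) ∣ vP P j) := by
  push_neg at hnontriv
  have habc : a * b * c ≠ 0 := hnontriv.1
  have ha : a ≠ 0 := by intro h; exact habc (by rw [h]; ring)
  have hb : b ≠ 0 := by intro h; exact habc (by rw [h]; ring)
  have hc : c ≠ 0 := by intro h; exact habc (by rw [h]; ring)
  have h2O : (2 : 𝓞 K) ≠ 0 := two_ne_zero
  -- notation
  set A : K := algebraMap (𝓞 K) K a with hA_def
  set B : K := algebraMap (𝓞 K) K b with hB_def
  have hinj := FaithfulSMul.algebraMap_injective (𝓞 K) K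
  have hA : A ≠ 0 := by simpa [hA_def] using (map_ne_zero_iff _ hinj).mpr ha
  have hB : B ≠ 0 := by simpa [hB_def] using (map_ne_zero_iff _ hinj).mpr hb
  have h2K : (2 : K) ≠ 0 := two_ne_zero
  have h2alg : (2 : K) = algebraMap (𝓞 K) K (2 : 𝓞 K) := by
    rw [map_ofNat]
  set e : ℤ := vP P (2 : K) with he_def
  have he : 0 < e := by
    rw [he_def, h2alg]; exact vP_int_pos P 2 h2O hP2
  set va : ℤ := vP P A with hva_def
  set vb : ℤ := vP P B with hvb_def
  have hva0 : 0 ≤ va := vP_int_nonneg P a ha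
  have hvb0 : 0 ≤ vb := vP_int_nonneg P b hb
  have hppos : (0:ℤ) < p := by exact_mod_cast hp.pos
  -- exactly one of a, b in P
  have hprime := P.isPrime
  have hab := hprime.mem_or_mem hPab
  have hnotboth : ¬ (a ∈ P.asIdeal ∧ b ∈ P.asIdeal) := by
    rintro ⟨haP, hbP⟩
    have hcP : c ∈ P.asIdeal := by
      apply hprime.mem_of_pow_mem 2
      rw [← hsol]
      exact Ideal.add_mem _ (Ideal.pow_mem_of_mem _ haP p hp.pos)
        (Ideal.pow_mem_of_mem _ hbP p hp.pos)
    have hle : Ideal.span {a} ⊔ Ideal.span {b} ⊔ Ideal.span {c} ≤ P.asIdeal := by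
      refine sup_le (sup_le ?_ ?_) ?_ <;>
        rw [Ideal.span_le, Set.singleton_subset_iff] <;> assumption
    rw [hcoprime] at hle
    exact hprime.ne_top (top_le_iff.mp hle)
  -- rewrite j
  have h4 : (algebraMap (𝓞 K) K (4 : 𝓞 K)) = (2:K)^2 := by
    rw [map_ofNat]; norm_num
  have hNeq : algebraMap (𝓞 K) K (a ^ p + 4 * b ^ p) = A ^ p + (2:K)^2 * B ^ p := by
    rw [map_add, map_mul, map_pow, map_pow, h4, hA_def, hB_def]
  have hDeq : algebraMap (𝓞 K) K (a ^ 2 * b) = A ^ 2 * B := by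
    rw [map_mul, map_pow, hA_def, hB_def]
  set N : K := A ^ p + (2:K)^2 * B ^ p with hN_def
  have hj' : j = (2:K) ^ 6 * N ^ 3 / (A ^ 2 * B) ^ p := by rw [hj, hNeq, hDeq]
  have hv4B : vP P ((2:K)^2 * B ^ p) = 2 * e + p * vb := by
    rw [vP_mul P (pow_ne_zero 2 h2K) (pow_ne_zero p hB), vP_pow P h2K, vP_pow P hB]
    simp only [he_def, hvb_def]
    push_cast; ring
  have hvAp : vP P (A ^ p) = p * va := vP_pow P hA p
  -- helper to finish given vP N and nonzeroness
  have hD : A ^ 2 * B ≠ 0 := mul_ne_zero (pow_ne_zero 2 hA) hB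
  have hvD : vP P (A ^ 2 * B) = 2 * va + vb := by
    rw [vP_mul P (pow_ne_zero 2 hA) hB, vP_pow P hA]
    simp only [hva_def, hvb_def]
    push_cast; ring
  rcases hab with haP | hbP
  · -- Case A : a ∈ P, b ∉ P
    have hbP : b ∉ P.asIdeal := fun h => hnotboth ⟨haP, h⟩
    have hva1 : 1 ≤ va := vP_int_pos P a ha haP
    have hvb' : vb = 0 := vP_int_zero P b hb hbP
    have hlt : vP P ((2:K)^2 * B ^ p) < vP P (A ^ p) := by
      rw [hv4B, hvAp, hvb']
      have h1 : (p:ℤ) ≤ p * va := le_mul_of_one_le_right (le_of_lt hppos) hva1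
      linarith
    obtain ⟨hNne, hvN⟩ := vP_add_left P (mul_ne_zero (pow_ne_zero 2 h2K)
      (pow_ne_zero p hB)) (pow_ne_zero p hA) hlt
    rw [add_comm] at hNne hvN
    rw [hv4B, hvb', mul_zero, add_zero] at hvN
    have hvj : vP P j = 12 * e - 2 * (p * va) := by
      rw [hj', vP_div P (mul_ne_zero (pow_ne_zero 6 h2K) (pow_ne_zero 3 hNne))
        (pow_ne_zero p hD), vP_mul P (pow_ne_zero 6 h2K) (pow_ne_zero 3 hNne),
        vP_pow P h2K, vP_pow P hNne, vP_pow P hD, hvD, hvN, hvb']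
      ring
    have hpva : (p:ℤ) ≤ p * va := le_mul_of_one_le_right (le_of_lt hppos) hva1
    constructor
    · omega
    · rintro ⟨k, hk⟩
      rw [hvj] at hk
      have hdvd : (p:ℤ) ∣ 12 * e := ⟨k + 2 * va, by linarith [hk]⟩
      obtain ⟨m, hm⟩ := hdvd
      have hm1 : 1 ≤ m := by
        by_contra hcon
        push_neg at hcon
        have h0 : (p:ℤ) * m ≤ 0 := mul_nonpos_of_nonneg_of_nonpos (le_of_lt hppos) (by omega)
        linarith
      have hm2 : m < 2 := by
        by_contra hcon
        push_neg at hcon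
        have h0 : (p:ℤ) * 2 ≤ p * m := mul_le_mul_of_nonneg_left hcon (le_of_lt hppos)
        linarith
      have hm' : m = 1 := by omega
      rw [hm', mul_one] at hm
      obtain ⟨t, ht⟩ := hp.odd_of_ne_two hp2
      have : (p:ℤ) = 2 * t + 1 := by exact_mod_cast ht
      omega
  · -- Case B : b ∈ P, a ∉ P
    have haP : a ∉ P.asIdeal := fun h => hnotboth ⟨h, hbP⟩
    have hvb1 : 1 ≤ vb := vP_int_pos P b hb hbP
    have hva' : va = 0 := vP_int_zero P a ha haP
    have hlt : vP P (A ^ p) < vP P ((2:K)^2 * B ^ p) := by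
      rw [hv4B, hvAp, hva']
      have h1 : (0:ℤ) ≤ p * vb := mul_le_mul_of_nonneg_left hvb0 (le_of_lt hppos) |>.trans_eq' (by ring)
      linarith
    obtain ⟨hNne, hvN⟩ := vP_add_left P (pow_ne_zero p hA)
      (mul_ne_zero (pow_ne_zero 2 h2K) (pow_ne_zero p hB)) hlt
    rw [hvAp, hva', mul_zero] at hvN
    have hvj : vP P j = 6 * e - p * vb := by
      rw [hj', vP_div P (mul_ne_zero (pow_ne_zero 6 h2K) (pow_ne_zero 3 hNne))
        (pow_ne_zero p hD), vP_mul P (pow_ne_zero 6 h2K) (pow_ne_zero 3 hNne),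
        vP_pow P h2K, vP_pow P hNne, vP_pow P hD, hvD, hvN, hva']
      ring
    have hpvb : (p:ℤ) ≤ p * vb := le_mul_of_one_le_right (le_of_lt hppos) hvb1
    constructor
    · omega
    · rintro ⟨k, hk⟩
      rw [hvj] at hk
      have hdvd : (p:ℤ) ∣ 6 * e := ⟨k + vb, by linarith [hk]⟩
      obtain ⟨m, hm⟩ := hdvd
      have hm1 : 1 ≤ m := by
        by_contra hcon
        push_neg at hcon
        have h0 : (p:ℤ) * m ≤ 0 := mul_nonpos_of_nonneg_of_nonpos (le_of_lt hppos) (by omega)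
        linarith
      have h0 : (p:ℤ) ≤ p * m := le_mul_of_one_le_right (le_of_lt hppos) hm1
      linarith
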